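/- Let G = (V, E) be a finite simple graph with edge weights w : E → ℝ_{>0} and let 0 < ε₀ < 1. Let J ⊆ ℤ be a finite index set and for each j ∈ J let M_j be a matching of G, such that the edge sets M_j are pairwise disjoint and the following weight separation holds: for all j, j' ∈ J with j < j' and all e ∈ M_j, e' ∈ M_{j'}, one has w(e) ≤ ε₀^{j'−j} · w(e'). Let M ⊆ ∪_{j∈J} M_j be a matching such that every edge f ∈ (∪_{j∈J} M_j) ∖ M shares an endpoint with some edge e ∈ M satisfying w(e) ≥ w(f). Then Σ_{j∈J} w(M_j) ≤ (1 + 2ε₀/(1−ε₀)) · w(M). -/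

import Mathlib

open Finset
open scoped Classical

variable {V : Type*}

/-- `M` is a matching of the simple graph `G`: a set of edges of `G`,
no two of which share an endpoint. -/
def IsMatching (G : SimpleGraph V) (M : Finset (Sym2 V)) : Prop :=
  (M : Set (Sym2 V)) ⊆ G.edgeSet ∧
    ∀ e ∈ M, ∀ f ∈ M, e ≠ f → ∀ v : V, v ∈ e → v ∉ f

/-- The total weight of a finite set of edges. -/
def mWeight (w : Sym2 V → ℝ) (M : Finset (Sym2 V)) : ℝ := ∑ e ∈ M, w e

/-- A vertex is `M`-free if it is not an endpoint of any edge of `M`. -/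
def IsFreeVtx (M : Finset (Sym2 V)) (v : V) : Prop := ∀ e ∈ M, v ∉ e

/-- `yz(e) = y(u) + y(v) + ∑_{B ∈ Ω, u ∈ B, v ∈ B} z(B)` for an edge `e = uv`. -/
noncomputable def yzval (y : V → ℝ) (Ω : Finset (Finset V)) (z : Finset V → ℝ) :
    Sym2 V → ℝ :=
  Sym2.lift ⟨fun u v => y u + y v + ∑ B ∈ Ω, (if u ∈ B ∧ v ∈ B then z B else 0),
    fun u v => by
      have h : ∀ B : Finset V, (u ∈ B ∧ v ∈ B) = (v ∈ B ∧ u ∈ B) :=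
        fun B => propext and_comm
      simp only [h]
      ring⟩

/-- `‖e‖ = (‖u‖ + ‖v‖)/2` for an edge `e = uv`, given vertex weights `‖·‖`. -/
def edgeNorm (nrm : V → ℕ) : Sym2 V → ℕ :=
  Sym2.lift ⟨fun u v => (nrm u + nrm v) / 2, fun u v => by simp [Nat.add_comm]⟩

/-- A walk is alternating (for a path starting at a free vertex): its edges at even
positions are unmatched and its edges at odd positions are matched. -/
def IsAlternating (G : SimpleGraph V) (M : Finset (Sym2 V)) {u v : V}
    (p : G.Walk u v) : Prop :=
  ∀ (i : ℕ) (h : i < p.edges.length), (p.edges.get ⟨i, h⟩ ∈ M ↔ i % 2 = 1)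

/-- Auxiliary: a finite sum of powers `ε^k` over distinct exponents `k ≥ 1` is at most
`ε/(1-ε)`. -/
lemma aux_geom_tail (ε : ℝ) (hε0 : 0 < ε) (hε1 : ε < 1) (K : Finset ℕ)
    (hK : ∀ k ∈ K, 1 ≤ k) : ∑ k ∈ K, ε ^ k ≤ ε / (1 - ε) := by
  set N := K.sup id + 1 with hN
  have hsub : K ⊆ Finset.range N \ {0} := by
    intro k hk
    simp only [Finset.mem_sdiff, Finset.mem_range, Finset.mem_singleton]
    exact ⟨Nat.lt_succ_of_le (Finset.le_sup (f := id) hk), by have := hK k hk; omega⟩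
  have h1 : ∑ k ∈ K, ε ^ k ≤ ∑ k ∈ Finset.range N \ {0}, ε ^ k :=
    Finset.sum_le_sum_of_subset_of_nonneg hsub (fun k _ _ => by positivity)
  have h2 : ∑ k ∈ Finset.range N \ {0}, ε ^ k = (∑ k ∈ Finset.range N, ε ^ k) - 1 := by
    have h0 : ({0} : Finset ℕ) ⊆ Finset.range N := by simp [hN]
    have := Finset.sum_sdiff (f := fun k => ε ^ k) h0
    simp only [Finset.sum_singleton, pow_zero] at this
    linarith
  have h3 : ∑ k ∈ Finset.range N, ε ^ k ≤ (1 - ε)⁻¹ := by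
    have := Summable.sum_le_tsum (Finset.range N)
      (fun k _ => by positivity : ∀ k ∉ Finset.range N, (0:ℝ) ≤ ε ^ k)
      (summable_geometric_of_lt_one hε0.le hε1)
    rwa [tsum_geometric_of_lt_one hε0.le hε1] at this
  have hne : (1 : ℝ) - ε ≠ 0 := by linarith
  have h4 : (1 - ε)⁻¹ - 1 = ε / (1 - ε) := by field_simp; ring
  linarith

/-- Greedy merge charging: given pairwise-disjoint matchings `M_j` (`j ∈ J`)
with geometric weight separation (`w(e) ≤ ε₀^{j'−j}·w(e')` for `e ∈ M_j`, `e' ∈ M_{j'}`,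
`j < j'`), and a matching `M ⊆ ∪_j M_j` in which every discarded edge shares an endpoint
with a chosen edge of no smaller weight, one has
`∑_{j ∈ J} w(M_j) ≤ (1 + 2ε₀/(1−ε₀)) · w(M)`. -/

theorem mwm_greedy_merge_charging
    [Fintype V] [DecidableEq V]
    (G : SimpleGraph V) [DecidableRel G.Adj]
    (w : Sym2 V → ℝ) (hw : ∀ e ∈ G.edgeFinset, 0 < w e)
    (ε₀ : ℝ) (hε0 : 0 < ε₀) (hε1 : ε₀ < 1)
    (J : Finset ℤ) (Mfam : ℤ → Finset (Sym2 V))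
    (hmatch : ∀ j ∈ J, IsMatching G (Mfam j))
    (hdisj : ∀ j ∈ J, ∀ j' ∈ J, j ≠ j' → Disjoint (Mfam j) (Mfam j'))
    (hsep : ∀ j ∈ J, ∀ j' ∈ J, j < j' → ∀ e ∈ Mfam j, ∀ e' ∈ Mfam j',
      w e ≤ ε₀ ^ (j' - j) * w e')
    (M : Finset (Sym2 V)) (hM : IsMatching G M)
    (hMsub : M ⊆ J.biUnion Mfam)
    (hgreedy : ∀ f ∈ J.biUnion Mfam, f ∉ M →
      ∃ e ∈ M, w f ≤ w e ∧ ∃ v : V, v ∈ e ∧ v ∈ f) :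
    ∑ j ∈ J, mWeight w (Mfam j) ≤ (1 + 2 * ε₀ / (1 - ε₀)) * mWeight w M := by
  classical
  set T := J.biUnion Mfam with hT
  have hTE : ∀ f ∈ T, f ∈ G.edgeFinset := by
    intro f hf
    obtain ⟨j, hj, hfj⟩ := Finset.mem_biUnion.mp hf
    exact SimpleGraph.mem_edgeFinset.mpr ((hmatch j hj).1 hfj)
  have hwpos : ∀ f ∈ T, 0 < w f := fun f hf => hw f (hTE f hf)
  set D := T \ M with hD
  have hch : ∀ f ∈ D, ∃ e ∈ M, w f ≤ w e ∧ ∃ v : V, v ∈ e ∧ v ∈ f := by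
    intro f hf
    obtain ⟨hfT, hfM⟩ := Finset.mem_sdiff.mp hf
    exact hgreedy f hfT hfM
  choose! φ hφM hφw vφ hvφe hvφf using hch
  -- key per-edge bound
  have key : ∀ e ∈ M, ∑ f ∈ D.filter (fun f => φ f = e), w f ≤ 2 * ε₀ / (1 - ε₀) * w e := by
    intro e he
    obtain ⟨je, hje, hej⟩ := Finset.mem_biUnion.mp (hMsub he)
    set F := D.filter (fun f => φ f = e) with hF
    have hFprop : ∀ f ∈ F, f ∈ D ∧ w f ≤ w e ∧ ∃ v : V, v ∈ e ∧ v ∈ f := by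
      intro f hf
      obtain ⟨hfD, hfe⟩ := Finset.mem_filter.mp hf
      refine ⟨hfD, ?_, vφ f hfD, ?_, hvφf f hfD⟩
      · have := hφw f hfD; rwa [hfe] at this
      · have := hvφe f hfD; rwa [hfe] at this
    -- every f ∈ F lies in some level j' < je
    have hlev : ∀ f ∈ F, ∃ j' ∈ J.filter (· < je), f ∈ Mfam j' := by
      intro f hf
      obtain ⟨hfD, hfw, v, hve, hvf⟩ := hFprop f hf
      have hfM : f ∉ M := (Finset.mem_sdiff.mp hfD).2
      obtain ⟨j', hj', hfj'⟩ := Finset.mem_biUnion.mp (Finset.mem_sdiff.mp hfD).1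
      refine ⟨j', Finset.mem_filter.mpr ⟨hj', ?_⟩, hfj'⟩
      rcases lt_trichotomy j' je with h | h | h
      · exact h
      · exfalso
        have hne : e ≠ f := fun h' => hfM (h' ▸ he)
        subst h
        exact (hmatch j' hj').2 e hej f hfj' hne v hve hvf
      · exfalso
        have hwe : w e ≤ ε₀ ^ (j' - je) * w f := hsep je hje j' hj' h e hej f hfj'
        have hfpos : 0 < w f := hwpos f (Finset.mem_sdiff.mp hfD).1
        have hlt1 : ε₀ ^ (j' - je) < 1 := by
          have hnn : (0:ℤ) ≤ j' - je := by omega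
          rw [← Int.toNat_of_nonneg hnn, zpow_natCast]
          apply pow_lt_one₀ hε0.le hε1
          omega
        nlinarith
    -- F is covered by the per-level pieces
    have hFsub : F ⊆ (J.filter (· < je)).biUnion (fun j' => (Mfam j').filter (· ∈ F)) := by
      intro f hf
      obtain ⟨j', hj', hfj'⟩ := hlev f hf
      exact Finset.mem_biUnion.mpr ⟨j', hj', Finset.mem_filter.mpr ⟨hfj', hf⟩⟩
    have hFnonneg : ∀ f ∈ (J.filter (· < je)).biUnion (fun j' => (Mfam j').filter (· ∈ F)),
        f ∉ F → 0 ≤ w f := by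
      intro f hf _
      obtain ⟨j', hj', hfj'⟩ := Finset.mem_biUnion.mp hf
      exact (hwpos f (Finset.mem_biUnion.mpr ⟨j', (Finset.mem_filter.mp hj').1,
        (Finset.mem_filter.mp hfj').1⟩)).le
    have hPD : (↑(J.filter (· < je)) : Set ℤ).PairwiseDisjoint
        (fun j' => (Mfam j').filter (· ∈ F)) := by
      intro a ha b hb hab
      have := hdisj a (Finset.mem_filter.mp ha).1 b (Finset.mem_filter.mp hb).1 hab
      exact (this.mono (Finset.filter_subset _ _) (Finset.filter_subset _ _))
    have step1 : ∑ f ∈ F, w f ≤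
        ∑ j' ∈ J.filter (· < je), ∑ f ∈ (Mfam j').filter (· ∈ F), w f := by
      rw [← Finset.sum_biUnion hPD]
      exact Finset.sum_le_sum_of_subset_of_nonneg hFsub hFnonneg
    -- two endpoints of e
    obtain ⟨u, v, rfl⟩ : ∃ u v, e = s(u, v) := by
      induction e using Sym2.ind with | _ u v => exact ⟨u, v, rfl⟩
    -- per-level bound
    have step2 : ∀ j' ∈ J.filter (· < je),
        ∑ f ∈ (Mfam j').filter (· ∈ F), w f ≤ 2 * (ε₀ ^ (je - j') * w s(u, v)) := by
      intro j' hj'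
      obtain ⟨hj'J, hlt⟩ := Finset.mem_filter.mp hj'
      have hcard : ((Mfam j').filter (· ∈ F)).card ≤ 2 := by
        have hsub2 : (Mfam j').filter (· ∈ F) ⊆
            (Mfam j').filter (u ∈ ·) ∪ (Mfam j').filter (v ∈ ·) := by
          intro f hf
          obtain ⟨hfj', hfF⟩ := Finset.mem_filter.mp hf
          obtain ⟨_, _, x, hxe, hxf⟩ := hFprop f hfF
          rcases Sym2.mem_iff.mp hxe with h | h
          · exact Finset.mem_union_left _ (Finset.mem_filter.mpr ⟨hfj', h ▸ hxf⟩)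
          · exact Finset.mem_union_right _ (Finset.mem_filter.mpr ⟨hfj', h ▸ hxf⟩)
        have c1 : ∀ x : V, ((Mfam j').filter (x ∈ ·)).card ≤ 1 := by
          intro x
          apply Finset.card_le_one.mpr
          intro a ha b hb
          obtain ⟨haj, hax⟩ := Finset.mem_filter.mp ha
          obtain ⟨hbj, hbx⟩ := Finset.mem_filter.mp hb
          by_contra hne
          exact (hmatch j' hj'J).2 a haj b hbj hne x hax hbx
        calc ((Mfam j').filter (· ∈ F)).card
            ≤ ((Mfam j').filter (u ∈ ·) ∪ (Mfam j').filter (v ∈ ·)).card :=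
              Finset.card_le_card hsub2
          _ ≤ ((Mfam j').filter (u ∈ ·)).card + ((Mfam j').filter (v ∈ ·)).card :=
              Finset.card_union_le _ _
          _ ≤ 2 := by have := c1 u; have := c1 v; omega
      have hbd : ∀ f ∈ (Mfam j').filter (· ∈ F), w f ≤ ε₀ ^ (je - j') * w s(u, v) := by
        intro f hf
        exact hsep j' hj'J je hje hlt f (Finset.mem_filter.mp hf).1 s(u, v) hej
      have hbnn : 0 ≤ ε₀ ^ (je - j') * w s(u, v) := by
        have := hwpos s(u, v) (Finset.mem_biUnion.mpr ⟨je, hje, hej⟩)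
        have : (0:ℝ) ≤ ε₀ ^ (je - j') := le_of_lt (zpow_pos hε0 _)
        positivity
      calc ∑ f ∈ (Mfam j').filter (· ∈ F), w f
          ≤ ((Mfam j').filter (· ∈ F)).card • (ε₀ ^ (je - j') * w s(u, v)) :=
            Finset.sum_le_card_nsmul _ _ _ hbd
        _ = (((Mfam j').filter (· ∈ F)).card : ℝ) * (ε₀ ^ (je - j') * w s(u, v)) := by
            rw [nsmul_eq_mul]
        _ ≤ 2 * (ε₀ ^ (je - j') * w s(u, v)) := by
            apply mul_le_mul_of_nonneg_right _ hbnn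
            exact_mod_cast hcard
    have hepos : 0 < w s(u, v) := hwpos s(u, v) (Finset.mem_biUnion.mpr ⟨je, hje, hej⟩)
    -- geometric sum over levels
    have hgeo : ∑ j' ∈ J.filter (· < je), ε₀ ^ (je - j') ≤ ε₀ / (1 - ε₀) := by
      have hinj : Set.InjOn (fun j' => (je - j').toNat) ↑(J.filter (· < je)) := by
        intro a ha b hb hab
        simp only [Finset.coe_filter, Set.mem_setOf_eq] at ha hb
        have hab' : (je - a).toNat = (je - b).toNat := hab
        omega
      have hrw : ∑ j' ∈ J.filter (· < je), ε₀ ^ (je - j') =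
          ∑ k ∈ (J.filter (· < je)).image (fun j' => (je - j').toNat), ε₀ ^ k := by
        rw [Finset.sum_image hinj]
        apply Finset.sum_congr rfl
        intro j' hj'
        have hlt := (Finset.mem_filter.mp hj').2
        rw [← zpow_natCast, Int.toNat_of_nonneg (by omega)]
      rw [hrw]
      apply aux_geom_tail ε₀ hε0 hε1
      intro k hk
      obtain ⟨j', hj', rfl⟩ := Finset.mem_image.mp hk
      have := (Finset.mem_filter.mp hj').2
      omega
    calc ∑ f ∈ F, w f
        ≤ ∑ j' ∈ J.filter (· < je), ∑ f ∈ (Mfam j').filter (· ∈ F), w f := step1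
      _ ≤ ∑ j' ∈ J.filter (· < je), 2 * (ε₀ ^ (je - j') * w s(u, v)) :=
          Finset.sum_le_sum step2
      _ = 2 * w s(u, v) * ∑ j' ∈ J.filter (· < je), ε₀ ^ (je - j') := by
          rw [Finset.mul_sum]; apply Finset.sum_congr rfl; intro j' _; ring
      _ ≤ 2 * w s(u, v) * (ε₀ / (1 - ε₀)) := by
          apply mul_le_mul_of_nonneg_left hgeo (by positivity)
      _ = 2 * ε₀ / (1 - ε₀) * w s(u, v) := by ring
  -- assemble
  have hPDJ : (↑J : Set ℤ).PairwiseDisjoint Mfam := fun a ha b hb hab => hdisj a ha b hb hab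
  have hsplit : ∑ j ∈ J, mWeight w (Mfam j) = ∑ f ∈ T, w f := by
    rw [hT, Finset.sum_biUnion hPDJ]; rfl
  have hTsum : ∑ f ∈ T, w f = ∑ f ∈ M, w f + ∑ f ∈ D, w f := by
    have h := Finset.sum_sdiff (f := w) hMsub
    rw [hD]
    linarith
  have hfib : ∑ f ∈ D, w f = ∑ e ∈ M, ∑ f ∈ D.filter (fun f => φ f = e), w f := by
    rw [eq_comm]
    exact Finset.sum_fiberwise_of_maps_to (fun f hf => hφM f hf) w
  have hDbd : ∑ f ∈ D, w f ≤ 2 * ε₀ / (1 - ε₀) * ∑ e ∈ M, w e := by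
    rw [hfib, Finset.mul_sum]
    exact Finset.sum_le_sum key
  have hMeq : mWeight w M = ∑ e ∈ M, w e := rfl
  rw [hsplit, hTsum, hMeq]
  linarith
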